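/- Let d, m, s be integers with d ≥ m ≥ 3 and m - 2 ≥ s ≥ 0. Define r' = max{a ∈ ℕ₀ : a ≤ s and 2^a ≤ m-1} and r = max{a ∈ ℕ₀ : a ≤ s+1 and 2^a ≤ m}. Then (s+1)·(s/d + (m-2-s)/(d+1-r')) + (d-s)·((s+1)/d + (m-2-s)/(d+1-r) - 1/2) ≤ m - 2. -/

import Mathlib

theorem findGreatest_frac_ineq2 (d m s : ℕ) (hm : 3 ≤ m) (hmd : m ≤ d)
    (hs : s + 2 ≤ m) :
    ((s : ℚ) + 1) * ((s : ℚ) / (d : ℚ) +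
        ((m : ℚ) - 2 - (s : ℚ)) /
          ((d : ℚ) + 1 - (Nat.findGreatest (fun a => 2 ^ a ≤ m - 1) s : ℚ))) +
      ((d : ℚ) - (s : ℚ)) * (((s : ℚ) + 1) / (d : ℚ) +
        ((m : ℚ) - 2 - (s : ℚ)) /
          ((d : ℚ) + 1 - (Nat.findGreatest (fun a => 2 ^ a ≤ m) (s + 1) : ℚ)) - 1 / 2) ≤
      (m : ℚ) - 2 := by
  set r' := Nat.findGreatest (fun a => 2 ^ a ≤ m - 1) s with hr'def
  set r := Nat.findGreatest (fun a => 2 ^ a ≤ m) (s + 1) with hrdef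
  -- natural number facts
  have hr1 : 1 ≤ r := Nat.le_findGreatest (by omega) (by simpa using by omega)
  have hrs : r ≤ s + 1 := Nat.findGreatest_le _
  have hr'le : r' ≤ s := Nat.findGreatest_le _
  have hrspec : 2 ^ r ≤ m :=
    Nat.findGreatest_spec (P := fun a => 2 ^ a ≤ m) (m := 1) (by omega) (by simpa using by omega)
  have hr'r : r' ≤ r := by
    calc r' ≤ Nat.findGreatest (fun a => 2 ^ a ≤ m) s :=
          Nat.findGreatest_mono_left (fun n h => by omega) s
      _ ≤ r := Nat.findGreatest_mono_right _ (by omega)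
  have pow3 : ∀ k : ℕ, 3 * k ≤ 2 ^ k + 2 := by
    intro k
    induction k with
    | zero => simp
    | succ n ih =>
      rcases Nat.lt_or_ge n 2 with h | h
      · interval_cases n <;> norm_num
      · have h4 : 4 ≤ 2 ^ n := by
          calc (4 : ℕ) = 2 ^ 2 := rfl
            _ ≤ 2 ^ n := Nat.pow_le_pow_right (by norm_num) h
        have e : 2 ^ (n + 1) = 2 * 2 ^ n := by ring
        omega
  have hkey : 2 * r + r' ≤ d + 1 := by
    rcases Nat.lt_or_ge r' r with h | h
    · -- 2r + r' ≤ 3r - 1 ≤ 2^r + 1 ≤ m + 1 ≤ d + 1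
      have := pow3 r
      omega
    · -- r' = r ≥ 1 > 0, so 2^r ≤ m - 1
      have hr'eq : r' = r := le_antisymm hr'r h
      have hr'pos : 0 < r' := by omega
      obtain ⟨n, hn0, hns, hnP⟩ := (Nat.findGreatest_pos (P := fun a => 2 ^ a ≤ m - 1)).mp hr'pos
      have hspec : 2 ^ r' ≤ m - 1 :=
        Nat.findGreatest_spec (P := fun a => 2 ^ a ≤ m - 1) hns hnP
      have := pow3 r
      rw [hr'eq] at hspec
      omega
  -- rational setup
  have hd3 : 3 ≤ d := le_trans hm hmd
  set x : ℚ := (d : ℚ) + 1 - (r' : ℚ) with hxdef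
  set y : ℚ := (d : ℚ) + 1 - (r : ℚ) with hydef
  have hr'Q : (r' : ℚ) ≤ (s : ℚ) := by exact_mod_cast hr'le
  have hrQ : (r : ℚ) ≤ (s : ℚ) + 1 := by exact_mod_cast hrs
  have hr'rQ : (r' : ℚ) ≤ (r : ℚ) := by exact_mod_cast hr'r
  have hkeyQ : 2 * (r : ℚ) + (r' : ℚ) ≤ (d : ℚ) + 1 := by exact_mod_cast hkey
  have hsmQ : (s : ℚ) + 2 ≤ (m : ℚ) := by exact_mod_cast hs
  have hmdQ : (m : ℚ) ≤ (d : ℚ) := by exact_mod_cast hmd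
  have hdQ : (0 : ℚ) < (d : ℚ) := by
    have : (3 : ℚ) ≤ (d : ℚ) := by exact_mod_cast hd3
    linarith
  have hx : 0 < x := by
    rw [hxdef]; linarith
  have hy : 0 < y := by
    rw [hydef]; linarith
  have hyx : y ≤ x := by rw [hxdef, hydef]; linarith
  have hM : (0 : ℚ) ≤ (m : ℚ) - 2 - (s : ℚ) := by linarith
  have hMd : (m : ℚ) - 2 - (s : ℚ) ≤ (d : ℚ) - (s : ℚ) - 2 := by linarith
  -- bracket bound
  have hb : ((s : ℚ) + 1) / x + ((d : ℚ) - (s : ℚ)) / y - 1 ≤ (r : ℚ) / x := by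
    have e1 : ((d : ℚ) - (s : ℚ)) / y - 1 = ((r : ℚ) - (s : ℚ) - 1) / y := by
      field_simp [hydef]
      ring
    have e2 : ((r : ℚ) - (s : ℚ) - 1) / y ≤ ((r : ℚ) - (s : ℚ) - 1) / x := by
      rw [div_le_div_iff₀ hy hx]
      nlinarith
    have e3 : ((s : ℚ) + 1) / x + ((r : ℚ) - (s : ℚ) - 1) / x = (r : ℚ) / x := by
      rw [← add_div]
      congr 1
      ring
    linarith
  have h2 : ((m : ℚ) - 2 - (s : ℚ)) * ((r : ℚ) / x) ≤ ((d : ℚ) - (s : ℚ) - 2) / 2 := by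
    have e : ((m : ℚ) - 2 - (s : ℚ)) * ((r : ℚ) / x)
        = (((m : ℚ) - 2 - (s : ℚ)) * (r : ℚ)) / x := by ring
    rw [e, div_le_div_iff₀ hx (by norm_num : (0:ℚ) < 2)]
    have h2rx : 2 * (r : ℚ) ≤ x := by rw [hxdef]; linarith
    have hrnn : (0 : ℚ) ≤ (r : ℚ) := by positivity
    nlinarith
  have h1 : ((m : ℚ) - 2 - (s : ℚ)) * (((s : ℚ) + 1) / x + ((d : ℚ) - (s : ℚ)) / y - 1)
      ≤ ((d : ℚ) - (s : ℚ) - 2) / 2 :=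
    le_trans (mul_le_mul_of_nonneg_left hb hM) h2
  have expand : ((s : ℚ) + 1) * ((s : ℚ) / (d : ℚ) + ((m : ℚ) - 2 - (s : ℚ)) / x) +
      ((d : ℚ) - (s : ℚ)) * (((s : ℚ) + 1) / (d : ℚ) + ((m : ℚ) - 2 - (s : ℚ)) / y - 1 / 2)
      = ((s : ℚ) + 1) +
        ((m : ℚ) - 2 - (s : ℚ)) * (((s : ℚ) + 1) / x + ((d : ℚ) - (s : ℚ)) / y - 1)
        + ((m : ℚ) - 2 - (s : ℚ)) - ((d : ℚ) - (s : ℚ)) / 2 := by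
    field_simp
    ring
  linarith [expand, h1]
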